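/- arXiv:2411.08536 — 2 statements merged into one kernel-verified Lean document; each statement's English description precedes it below -/
import Mathlib

section
/- The extended shuffle product ⧢ on ℋ_ℤ is associative: (a ⧢ b) ⧢ c = a ⧢ (b ⧢ c) for all a, b, c ∈ ℋ_ℤ. -/
noncomputable section

/-- The vector space ℋ_ℤ with basis the symbols `[s₁,…,s_k]` (lists of integers),
the empty list being the unit `1`. -/
abbrev HZ : Type := List ℤ →₀ ℚ

/-- The basis symbol `[s₁,…,s_k]`. -/
def bs (l : List ℤ) : HZ := Finsupp.single l 1

/-- Linear extension of a map defined on basis symbols. -/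
def hlift (f : List ℤ → HZ) : HZ →ₗ[ℚ] HZ := Finsupp.lift HZ ℚ (List ℤ) f

/-- Prepending a `0` entry to every basis symbol. -/
def preZ : HZ →ₗ[ℚ] HZ := hlift fun l => bs (0 :: l)

/-- The operator `I` adding 1 to the first entry. -/
def Imap : HZ →ₗ[ℚ] HZ := hlift fun l =>
  match l with
  | [] => 0
  | s :: r => bs ((s + 1) :: r)

/-- The operator `J` subtracting 1 from the first entry, with `J(1) = 0`. -/
def Jmap : HZ →ₗ[ℚ] HZ := hlift fun l =>
  match l with
  | [] => 0
  | s :: r => bs ((s - 1) :: r)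

/-- The five-case recursion defining the extended shuffle product on ℋ_ℤ. -/
def IsExtShuffle (m : HZ →ₗ[ℚ] HZ →ₗ[ℚ] HZ) : Prop :=
  (∀ x, m (bs []) x = x) ∧
  (∀ x, m x (bs []) = x) ∧
  (∀ (s' : List ℤ) (t₁ : ℤ) (t' : List ℤ),
    m (bs (0 :: s')) (bs (t₁ :: t')) = preZ (m (bs s') (bs (t₁ :: t')))) ∧
  (∀ (s₁ : ℤ), 0 < s₁ → ∀ (s' t' : List ℤ),
    m (bs (s₁ :: s')) (bs (0 :: t')) = preZ (m (bs (s₁ :: s')) (bs t'))) ∧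
  (∀ (s₁ t₁ : ℤ), 0 < s₁ → 0 < t₁ → ∀ (s' t' : List ℤ),
    m (bs (s₁ :: s')) (bs (t₁ :: t')) =
      Imap (m (bs (s₁ :: s')) (bs ((t₁ - 1) :: t'))) +
      Imap (m (bs ((s₁ - 1) :: s')) (bs (t₁ :: t')))) ∧
  (∀ (s₁ t₁ : ℤ), 0 < s₁ → t₁ < 0 → ∀ (s' t' : List ℤ),
    m (bs (s₁ :: s')) (bs (t₁ :: t')) =
      Jmap (m (bs (s₁ :: s')) (bs ((t₁ + 1) :: t'))) -
      m (bs ((s₁ - 1) :: s')) (bs ((t₁ + 1) :: t'))) ∧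
  (∀ (s₁ : ℤ), s₁ < 0 → ∀ (t₁ : ℤ) (s' t' : List ℤ),
    m (bs (s₁ :: s')) (bs (t₁ :: t')) =
      Jmap (m (bs ((s₁ + 1) :: s')) (bs (t₁ :: t'))) -
      m (bs ((s₁ + 1) :: s')) (bs ((t₁ - 1) :: t')))

lemma hlift_bs (f : List ℤ → HZ) (l : List ℤ) : hlift f (bs l) = f l := by
  simp [hlift, bs, Finsupp.lift_apply, Finsupp.sum_single_index]

lemma preZ_bs (l : List ℤ) : preZ (bs l) = bs (0 :: l) := hlift_bs _ _
lemma Imap_bs_nil : Imap (bs []) = 0 := hlift_bs _ _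
lemma Imap_bs_cons (s : ℤ) (r : List ℤ) : Imap (bs (s :: r)) = bs ((s + 1) :: r) := hlift_bs _ _
lemma Jmap_bs_nil : Jmap (bs []) = 0 := hlift_bs _ _
lemma Jmap_bs_cons (s : ℤ) (r : List ℤ) : Jmap (bs (s :: r)) = bs ((s - 1) :: r) := hlift_bs _ _

lemma single_eq_smul_bs (l : List ℤ) (q : ℚ) : Finsupp.single l q = q • bs l := by
  rw [bs, Finsupp.smul_single', mul_one]

def NEs : Submodule ℚ HZ := Submodule.span ℚ {x | ∃ l : List ℤ, l ≠ [] ∧ x = bs l}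
def NNs : Submodule ℚ HZ := Submodule.span ℚ {x | ∃ l : List ℤ, l ≠ [] ∧ 0 ≤ l.headI ∧ x = bs l}
def P1s : Submodule ℚ HZ := Submodule.span ℚ {x | ∃ l : List ℤ, l ≠ [] ∧ 1 ≤ l.headI ∧ x = bs l}

lemma bs_mem_NEs {l : List ℤ} (h : l ≠ []) : bs l ∈ NEs :=
  Submodule.subset_span ⟨l, h, rfl⟩

lemma preZ_mem_NEs (x : HZ) : preZ x ∈ NEs := by
  induction x using Finsupp.induction_linear with
  | zero => simp
  | add f g hf hg => rw [map_add]; exact Submodule.add_mem _ hf hg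
  | single a q =>
    rw [single_eq_smul_bs, map_smul]
    exact Submodule.smul_mem _ _ (by rw [preZ_bs]; exact bs_mem_NEs (by simp))

lemma preZ_mem_NNs (x : HZ) : preZ x ∈ NNs := by
  induction x using Finsupp.induction_linear with
  | zero => simp
  | add f g hf hg => rw [map_add]; exact Submodule.add_mem _ hf hg
  | single a q =>
    rw [single_eq_smul_bs, map_smul]
    refine Submodule.smul_mem _ _ ?_
    rw [preZ_bs]
    exact Submodule.subset_span ⟨0 :: a, by simp, by simp, rfl⟩

lemma Imap_mem_NNs {x : HZ} (hx : x ∈ NNs) : Imap x ∈ NNs := by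
  induction hx using Submodule.span_induction with
  | mem z hz =>
    obtain ⟨l, hne, hh, rfl⟩ := hz
    obtain ⟨h, r⟩ := List.exists_cons_of_ne_nil hne
    obtain ⟨t, rfl⟩ := r
    rw [Imap_bs_cons]
    exact Submodule.subset_span ⟨(h + 1) :: t, by simp, by simp at hh ⊢; omega, rfl⟩
  | zero => rw [map_zero]; exact Submodule.zero_mem _
  | add u v hu hv hpu hpv => rw [map_add]; exact Submodule.add_mem _ hpu hpv
  | smul q u hu hpu => rw [map_smul]; exact Submodule.smul_mem _ _ hpu

lemma Imap_mem_P1s {x : HZ} (hx : x ∈ NNs) : Imap x ∈ P1s := by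
  induction hx using Submodule.span_induction with
  | mem z hz =>
    obtain ⟨l, hne, hh, rfl⟩ := hz
    obtain ⟨h, t, rfl⟩ := List.exists_cons_of_ne_nil hne
    rw [Imap_bs_cons]
    exact Submodule.subset_span ⟨(h + 1) :: t, by simp, by simp at hh ⊢; omega, rfl⟩
  | zero => rw [map_zero]; exact Submodule.zero_mem _
  | add u v hu hv hpu hpv => rw [map_add]; exact Submodule.add_mem _ hpu hpv
  | smul q u hu hpu => rw [map_smul]; exact Submodule.smul_mem _ _ hpu

lemma Imap_mem_NEs (x : HZ) : Imap x ∈ NEs := by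
  induction x using Finsupp.induction_linear with
  | zero => rw [map_zero]; exact Submodule.zero_mem _
  | add f g hf hg => rw [map_add]; exact Submodule.add_mem _ hf hg
  | single a q =>
    rw [single_eq_smul_bs, map_smul]
    refine Submodule.smul_mem _ _ ?_
    cases a with
    | nil => rw [Imap_bs_nil]; exact Submodule.zero_mem _
    | cons h t => rw [Imap_bs_cons]; exact bs_mem_NEs (by simp)

lemma Jmap_mem_NEs (x : HZ) : Jmap x ∈ NEs := by
  induction x using Finsupp.induction_linear with
  | zero => rw [map_zero]; exact Submodule.zero_mem _
  | add f g hf hg => rw [map_add]; exact Submodule.add_mem _ hf hg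
  | single a q =>
    rw [single_eq_smul_bs, map_smul]
    refine Submodule.smul_mem _ _ ?_
    cases a with
    | nil => rw [Jmap_bs_nil]; exact Submodule.zero_mem _
    | cons h t => rw [Jmap_bs_cons]; exact bs_mem_NEs (by simp)

lemma Imap_Jmap {z : HZ} (hz : z ∈ NEs) : Imap (Jmap z) = z := by
  induction hz using Submodule.span_induction with
  | mem z hz =>
    obtain ⟨l, hne, rfl⟩ := hz
    obtain ⟨h, t, rfl⟩ := List.exists_cons_of_ne_nil hne
    rw [Jmap_bs_cons, Imap_bs_cons, sub_add_cancel]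
  | zero => simp
  | add u v hu hv hpu hpv => rw [map_add, map_add, hpu, hpv]
  | smul q u hu hpu => rw [map_smul, map_smul, hpu]

lemma Jmap_Imap {z : HZ} (hz : z ∈ NEs) : Jmap (Imap z) = z := by
  induction hz using Submodule.span_induction with
  | mem z hz =>
    obtain ⟨l, hne, rfl⟩ := hz
    obtain ⟨h, t, rfl⟩ := List.exists_cons_of_ne_nil hne
    rw [Imap_bs_cons, Jmap_bs_cons, add_sub_cancel_right]
  | zero => simp
  | add u v hu hv hpu hpv => rw [map_add, map_add, hpu, hpv]
  | smul q u hu hpu => rw [map_smul, map_smul, hpu]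

variable {m : HZ →ₗ[ℚ] HZ →ₗ[ℚ] HZ}

/-- `L3y`: the rule for head 0 on the left, for arbitrary second argument. -/
lemma L3y (hm : IsExtShuffle m) (s' : List ℤ) (y : HZ) :
    m (bs (0 :: s')) y = preZ (m (bs s') y) := by
  induction y using Finsupp.induction_linear with
  | zero => simp
  | add f g hf hg => simp only [map_add, hf, hg]
  | single a q =>
    simp only [single_eq_smul_bs, map_smul]
    cases a with
    | nil => rw [hm.2.1, hm.2.1, preZ_bs]
    | cons t₁ t' => rw [hm.2.2.1]

/-- `PL`: preZ on the left commutes out, for arbitrary arguments. -/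
lemma PL (hm : IsExtShuffle m) (x y : HZ) : m (preZ x) y = preZ (m x y) := by
  induction x using Finsupp.induction_linear with
  | zero => simp
  | add f g hf hg =>
    simp only [map_add, LinearMap.add_apply, hf, hg]
  | single a q =>
    simp only [single_eq_smul_bs, map_smul, LinearMap.smul_apply, preZ_bs, L3y hm]

/-- `L4y`: the rule for head 0 on the right, positive head on the left. -/
lemma L4y (hm : IsExtShuffle m) {s₁ : ℤ} (hs : 0 < s₁) (s' : List ℤ) (y : HZ) :
    m (bs (s₁ :: s')) (preZ y) = preZ (m (bs (s₁ :: s')) y) := by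
  induction y using Finsupp.induction_linear with
  | zero => simp
  | add f g hf hg => simp only [map_add, hf, hg]
  | single a q =>
    simp only [single_eq_smul_bs, map_smul, preZ_bs]
    rw [hm.2.2.2.1 s₁ hs s' a]

/-- Products of nonempty symbols lie in the span of nonempty symbols. -/
lemma NEprod_aux (hm : IsExtShuffle m) :
    ∀ (p : ℕ) (s₁ : ℤ) (s' : List ℤ) (t₁ : ℤ) (t' : List ℤ),
    3 * (-s₁).toNat + s₁.toNat + 2 * (-t₁).toNat + t₁.toNat < p →
    m (bs (s₁ :: s')) (bs (t₁ :: t')) ∈ NEs := by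
  intro p
  induction p with
  | zero => intro s₁ s' t₁ t' h; omega
  | succ p IH =>
    intro s₁ s' t₁ t' hp
    rcases lt_trichotomy s₁ 0 with hs | hs | hs
    · rw [hm.2.2.2.2.2.2 s₁ hs t₁ s' t']
      exact Submodule.sub_mem _ (Jmap_mem_NEs _) (IH _ _ _ _ (by omega))
    · subst hs; rw [hm.2.2.1]; exact preZ_mem_NEs _
    · rcases lt_trichotomy t₁ 0 with ht | ht | ht
      · rw [hm.2.2.2.2.2.1 s₁ t₁ hs ht]
        exact Submodule.sub_mem _ (Jmap_mem_NEs _) (IH _ _ _ _ (by omega))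
      · subst ht; rw [hm.2.2.2.1 s₁ hs]; exact preZ_mem_NEs _
      · rw [hm.2.2.2.2.1 s₁ t₁ hs ht]
        exact Submodule.add_mem _ (Imap_mem_NEs _) (Imap_mem_NEs _)

lemma NEprod (hm : IsExtShuffle m) (s₁ : ℤ) (s' : List ℤ) (t₁ : ℤ) (t' : List ℤ) :
    m (bs (s₁ :: s')) (bs (t₁ :: t')) ∈ NEs :=
  NEprod_aux hm (3 * (-s₁).toNat + s₁.toNat + 2 * (-t₁).toNat + t₁.toNat + 1)
    s₁ s' t₁ t' (by omega)

lemma NE1 (hm : IsExtShuffle m) (s₁ : ℤ) (s' : List ℤ) {y : HZ} (hy : y ∈ NEs) :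
    m (bs (s₁ :: s')) y ∈ NEs := by
  induction hy using Submodule.span_induction with
  | mem z hz =>
    obtain ⟨l, hne, rfl⟩ := hz
    obtain ⟨h, t, rfl⟩ := List.exists_cons_of_ne_nil hne
    exact NEprod hm _ _ _ _
  | zero => rw [map_zero]; exact Submodule.zero_mem _
  | add u v hu hv hpu hpv => rw [map_add]; exact Submodule.add_mem _ hpu hpv
  | smul q u hu hpu => rw [map_smul]; exact Submodule.smul_mem _ _ hpu

lemma NE2 (hm : IsExtShuffle m) {x y : HZ} (hx : x ∈ NEs) (hy : y ∈ NEs) :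
    m x y ∈ NEs := by
  induction hx using Submodule.span_induction with
  | mem z hz =>
    obtain ⟨l, hne, rfl⟩ := hz
    obtain ⟨h, t, rfl⟩ := List.exists_cons_of_ne_nil hne
    exact NE1 hm _ _ hy
  | zero => rw [map_zero, LinearMap.zero_apply]; exact Submodule.zero_mem _
  | add u v hu hv hpu hpv =>
    rw [map_add, LinearMap.add_apply]; exact Submodule.add_mem _ hpu hpv
  | smul q u hu hpu =>
    rw [map_smul, LinearMap.smul_apply]; exact Submodule.smul_mem _ _ hpu

/-- `J` is a derivation on products of nonempty symbols. -/
lemma DJsym (hm : IsExtShuffle m) (s₁ : ℤ) (s' : List ℤ) (t₁ : ℤ) (t' : List ℤ) :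
    Jmap (m (bs (s₁ :: s')) (bs (t₁ :: t'))) =
      m (bs ((s₁ - 1) :: s')) (bs (t₁ :: t')) +
      m (bs (s₁ :: s')) (bs ((t₁ - 1) :: t')) := by
  rcases le_or_gt s₁ 0 with hs | hs
  · have h7 := hm.2.2.2.2.2.2 (s₁ - 1) (by omega) t₁ s' t'
    rw [sub_add_cancel] at h7
    rw [h7]; abel
  · rcases le_or_gt t₁ 0 with ht | ht
    · have h6 := hm.2.2.2.2.2.1 s₁ (t₁ - 1) hs (by omega) s' t'
      rw [sub_add_cancel] at h6
      rw [h6]; abel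
    · rw [hm.2.2.2.2.1 s₁ t₁ hs ht, map_add, Jmap_Imap (NEprod hm _ _ _ _),
        Jmap_Imap (NEprod hm _ _ _ _)]
      abel

/-- `J` is a derivation on `NEs`. -/
lemma DJ (hm : IsExtShuffle m) {x y : HZ} (hx : x ∈ NEs) (hy : y ∈ NEs) :
    Jmap (m x y) = m (Jmap x) y + m x (Jmap y) := by
  induction hx using Submodule.span_induction with
  | mem z hz =>
    obtain ⟨l, hne, rfl⟩ := hz
    obtain ⟨h, t, rfl⟩ := List.exists_cons_of_ne_nil hne
    induction hy using Submodule.span_induction with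
    | mem w hw =>
      obtain ⟨l', hne', rfl⟩ := hw
      obtain ⟨h', t', rfl⟩ := List.exists_cons_of_ne_nil hne'
      rw [Jmap_bs_cons, Jmap_bs_cons]
      exact DJsym hm _ _ _ _
    | zero => simp
    | add u v hu hv hpu hpv => simp only [map_add, hpu, hpv]; abel
    | smul q u hu hpu => simp only [map_smul, hpu, smul_add]
  | zero => simp
  | add u v hu hv hpu hpv =>
    simp only [map_add, LinearMap.add_apply, hpu, hpv]; abel
  | smul q u hu hpu =>
    simp only [map_smul, LinearMap.smul_apply, hpu, smul_add]

/-- Products of nonempty symbols with nonnegative heads land in `NNs`. -/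
lemma NNprod_aux (hm : IsExtShuffle m) :
    ∀ (p : ℕ) (s₁ : ℤ) (s' : List ℤ) (t₁ : ℤ) (t' : List ℤ),
    0 ≤ s₁ → 0 ≤ t₁ → s₁.toNat + t₁.toNat < p →
    m (bs (s₁ :: s')) (bs (t₁ :: t')) ∈ NNs := by
  intro p
  induction p with
  | zero => intro s₁ s' t₁ t' _ _ h; omega
  | succ p IH =>
    intro s₁ s' t₁ t' hs0 ht0 hp
    rcases eq_or_lt_of_le hs0 with hs | hs
    · rw [← hs, hm.2.2.1]; exact preZ_mem_NNs _
    · rcases eq_or_lt_of_le ht0 with ht | ht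
      · rw [← ht, hm.2.2.2.1 s₁ hs]; exact preZ_mem_NNs _
      · rw [hm.2.2.2.2.1 s₁ t₁ hs ht]
        exact Submodule.add_mem _
          (Imap_mem_NNs (IH s₁ s' (t₁ - 1) t' (by omega) (by omega) (by omega)))
          (Imap_mem_NNs (IH (s₁ - 1) s' t₁ t' (by omega) (by omega) (by omega)))

lemma NNprod (hm : IsExtShuffle m) {s₁ t₁ : ℤ} (s' t' : List ℤ) (hs : 0 ≤ s₁) (ht : 0 ≤ t₁) :
    m (bs (s₁ :: s')) (bs (t₁ :: t')) ∈ NNs :=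
  NNprod_aux hm (s₁.toNat + t₁.toNat + 1) s₁ s' t₁ t' hs ht (by omega)

/-- Products of nonempty symbols with positive heads land in `P1s`. -/
lemma P1prod (hm : IsExtShuffle m) {s₁ t₁ : ℤ} (s' t' : List ℤ) (hs : 0 < s₁) (ht : 0 < t₁) :
    m (bs (s₁ :: s')) (bs (t₁ :: t')) ∈ P1s := by
  rw [hm.2.2.2.2.1 s₁ t₁ hs ht]
  exact Submodule.add_mem _
    (Imap_mem_P1s (NNprod hm s' t' (by omega) (by omega)))
    (Imap_mem_P1s (NNprod hm s' t' (by omega) (by omega)))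

/-- preZ on the right commutes out of products with elements of `P1s`. -/
lemma L4span (hm : IsExtShuffle m) {z : HZ} (hz : z ∈ P1s) (y : HZ) :
    m z (preZ y) = preZ (m z y) := by
  induction hz using Submodule.span_induction with
  | mem w hw =>
    obtain ⟨l, hne, hh, rfl⟩ := hw
    obtain ⟨h, t, rfl⟩ := List.exists_cons_of_ne_nil hne
    simp only [List.headI] at hh
    exact L4y hm (by omega) t y
  | zero => simp
  | add u v hu hv hpu hpv =>
    simp only [map_add, LinearMap.add_apply, hpu, hpv]
  | smul q u hu hpu =>
    simp only [map_smul, LinearMap.smul_apply, hpu]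

lemma DJ' (hm : IsExtShuffle m) {x y : HZ} (hx : x ∈ NEs) (hy : y ∈ NEs) :
    m (Jmap x) y = Jmap (m x y) - m x (Jmap y) := by
  rw [DJ hm hx hy]; abel

lemma DJ'' (hm : IsExtShuffle m) {x y : HZ} (hx : x ∈ NEs) (hy : y ∈ NEs) :
    m x (Jmap y) = Jmap (m x y) - m (Jmap x) y := by
  rw [DJ hm hx hy]; abel

lemma Irep (hm : IsExtShuffle m) {x y : HZ} (hx : x ∈ NEs) (hy : y ∈ NEs) :
    m x y = Imap (m (Jmap x) y + m x (Jmap y)) := by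
  rw [← DJ hm hx hy, Imap_Jmap (NE2 hm hx hy)]

/-- The termination measure on head entries. -/
def psi3 (a b c : List ℤ) : ℕ :=
  4 * (-a.headI).toNat + a.headI.toNat + 3 * (-b.headI).toNat + b.headI.toNat +
    2 * (-c.headI).toNat + c.headI.toNat

lemma assoc_aux (hm : IsExtShuffle m) : ∀ (n p : ℕ) (a b c : List ℤ),
    a.length + b.length + c.length < n → psi3 a b c < p →
    m (m (bs a) (bs b)) (bs c) = m (bs a) (m (bs b) (bs c)) := by
  intro n
  induction n with
  | zero => intro p a b c h; omega
  | succ n IHn =>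
    intro p
    induction p with
    | zero => intro a b c _ h; omega
    | succ p IHp =>
      intro a b c hn hp
      rcases a with _ | ⟨x, a'⟩
      · rw [hm.1, hm.1]
      rcases b with _ | ⟨y, b'⟩
      · rw [hm.2.1, hm.1]
      rcases c with _ | ⟨z, c'⟩
      · rw [hm.2.1, hm.2.1]
      have hA : bs (x :: a') ∈ NEs := bs_mem_NEs (by simp)
      have hB : bs (y :: b') ∈ NEs := bs_mem_NEs (by simp)
      have hC : bs (z :: c') ∈ NEs := bs_mem_NEs (by simp)
      rcases lt_trichotomy x 0 with hx | hx | hx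
      · -- case (v) : x < 0
        have hU : bs ((x + 1) :: a') ∈ NEs := bs_mem_NEs (by simp)
        have hZ := NEprod hm (x + 1) a' y b'
        have hBC := NEprod hm y b' z c'
        have e1 := IHp ((x + 1) :: a') (y :: b') (z :: c') (by simpa using hn)
          (by simp only [psi3, List.headI] at hp ⊢; omega)
        have e2 := IHp ((x + 1) :: a') (y :: b') ((z - 1) :: c') (by simpa using hn)
          (by simp only [psi3, List.headI] at hp ⊢; omega)
        have e3 := IHp ((x + 1) :: a') ((y - 1) :: b') (z :: c') (by simpa using hn)
          (by simp only [psi3, List.headI] at hp ⊢; omega)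
        rw [hm.2.2.2.2.2.2 x hx y a' b']
        simp only [map_sub, LinearMap.sub_apply]
        rw [DJ' hm hZ hC, Jmap_bs_cons z c', e1, e2, e3]
        have hAeq : bs (x :: a') = Jmap (bs ((x + 1) :: a')) := by
          rw [Jmap_bs_cons, add_sub_cancel_right]
        rw [hAeq, DJ' hm hU hBC, DJsym hm y b' z c', map_add]
        abel
      · -- x = 0 : case (i)
        subst hx
        have e := IHn (psi3 a' (y :: b') (z :: c') + 1) a' (y :: b') (z :: c')
          (by simp only [List.length_cons] at hn ⊢; omega) (by omega)
        rw [hm.2.2.1 a' y b', PL hm, e, ← L3y hm]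
      · rcases lt_trichotomy y 0 with hy | hy | hy
        · -- case (vi) : x > 0, y < 0
          have hV : bs ((y + 1) :: b') ∈ NEs := bs_mem_NEs (by simp)
          have hAV := NEprod hm x a' (y + 1) b'
          have hVC := NEprod hm (y + 1) b' z c'
          have e1 := IHp (x :: a') ((y + 1) :: b') (z :: c') (by simpa using hn)
            (by simp only [psi3, List.headI] at hp ⊢; omega)
          have e2 := IHp (x :: a') ((y + 1) :: b') ((z - 1) :: c') (by simpa using hn)
            (by simp only [psi3, List.headI] at hp ⊢; omega)
          have e3 := IHp ((x - 1) :: a') ((y + 1) :: b') (z :: c') (by simpa using hn)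
            (by simp only [psi3, List.headI] at hp ⊢; omega)
          have hBeq : bs (y :: b') = Jmap (bs ((y + 1) :: b')) := by
            rw [Jmap_bs_cons, add_sub_cancel_right]
          rw [hBeq, DJ'' hm hA hV, Jmap_bs_cons x a']
          simp only [map_sub, LinearMap.sub_apply]
          rw [DJ' hm hAV hC, Jmap_bs_cons z c', e1, e2, e3,
            DJ' hm hV hC, Jmap_bs_cons z c', map_sub,
            DJ'' hm hA hVC, Jmap_bs_cons x a']
          abel
        · -- case (ii) : x > 0, y = 0
          subst hy
          have e := IHn (psi3 (x :: a') b' (z :: c') + 1) (x :: a') b' (z :: c')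
            (by simp only [List.length_cons] at hn ⊢; omega) (by omega)
          rw [hm.2.2.2.1 x hx a' b', PL hm, e, L3y hm b' (bs (z :: c')),
            L4y hm hx a' (m (bs b') (bs (z :: c')))]
        · rcases lt_trichotomy z 0 with hz | hz | hz
          · -- case (vii) : x > 0, y > 0, z < 0
            have hV : bs ((z + 1) :: c') ∈ NEs := bs_mem_NEs (by simp)
            have hAB := NEprod hm x a' y b'
            have hBV := NEprod hm y b' (z + 1) c'
            have e1 := IHp (x :: a') (y :: b') ((z + 1) :: c') (by simpa using hn)
              (by simp only [psi3, List.headI] at hp ⊢; omega)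
            have e2 := IHp ((x - 1) :: a') (y :: b') ((z + 1) :: c') (by simpa using hn)
              (by simp only [psi3, List.headI] at hp ⊢; omega)
            have e3 := IHp (x :: a') ((y - 1) :: b') ((z + 1) :: c') (by simpa using hn)
              (by simp only [psi3, List.headI] at hp ⊢; omega)
            have hCeq : bs (z :: c') = Jmap (bs ((z + 1) :: c')) := by
              rw [Jmap_bs_cons, add_sub_cancel_right]
            rw [hCeq, DJ'' hm hAB hV, DJsym hm x a' y b']
            simp only [map_add, LinearMap.add_apply]
            rw [e1, e2, e3, DJ'' hm hB hV, map_sub, DJ'' hm hA hBV,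
              Jmap_bs_cons y b', Jmap_bs_cons x a']
            abel
          · -- case (iii) : x > 0, y > 0, z = 0
            subst hz
            have hP := P1prod hm a' b' hx hy
            have e := IHn (psi3 (x :: a') (y :: b') c' + 1) (x :: a') (y :: b') c'
              (by simp only [List.length_cons] at hn ⊢; omega) (by omega)
            rw [show bs ((0 : ℤ) :: c') = preZ (bs c') from (preZ_bs c').symm,
              L4span hm hP (bs c'), e, L4y hm hy b' (bs c'),
              L4y hm hx a' (m (bs (y :: b')) (bs c'))]
          · -- case (iv) : x > 0, y > 0, z > 0
            have hAB := NEprod hm x a' y b'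
            have hBC := NEprod hm y b' z c'
            have e1 := IHp ((x - 1) :: a') (y :: b') (z :: c') (by simpa using hn)
              (by simp only [psi3, List.headI] at hp ⊢; omega)
            have e2 := IHp (x :: a') ((y - 1) :: b') (z :: c') (by simpa using hn)
              (by simp only [psi3, List.headI] at hp ⊢; omega)
            have e3 := IHp (x :: a') (y :: b') ((z - 1) :: c') (by simpa using hn)
              (by simp only [psi3, List.headI] at hp ⊢; omega)
            rw [Irep hm hAB hC, Irep hm hA hBC, DJsym hm x a' y b', DJsym hm y b' z c',
              Jmap_bs_cons z c', Jmap_bs_cons x a']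
            simp only [map_add, LinearMap.add_apply]
            rw [e1, e2, e3]
            abel

/-- The extended shuffle product is associative. -/
theorem extended_shuffle_assoc (m : HZ →ₗ[ℚ] HZ →ₗ[ℚ] HZ) (hm : IsExtShuffle m) :
    ∀ a b c : HZ, m (m a b) c = m a (m b c) := by
  have key : ∀ la lb lc : List ℤ,
      m (m (bs la) (bs lb)) (bs lc) = m (bs la) (m (bs lb) (bs lc)) := fun la lb lc =>
    assoc_aux hm (la.length + lb.length + lc.length + 1) (psi3 la lb lc + 1) la lb lc
      (by omega) (by omega)
  intro a b c
  induction a using Finsupp.induction_linear with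
  | zero => simp
  | add f g hf hg => simp only [map_add, LinearMap.add_apply, hf, hg]
  | single la qa =>
    induction b using Finsupp.induction_linear with
    | zero => simp
    | add f g hf hg => simp only [map_add, LinearMap.add_apply, hf, hg]
    | single lb qb =>
      induction c using Finsupp.induction_linear with
      | zero => simp
      | add f g hf hg => simp only [map_add, hf, hg]
      | single lc qc =>
        simp only [single_eq_smul_bs, map_smul, LinearMap.smul_apply]
        rw [key la lb lc]
end
end

section
/- The subspace ℋ_{ℤ≤0} of ℋ_ℤ spanned by 1 and all symbols [s₁,…,s_k] with all entries s_i ≤ 0 is closed under the extended shuffle product ⧢ and under J; i.e., (ℋ_{ℤ≤0}, ⧢, J) is a differential subalgebra of (ℋ_ℤ, ⧢, J). -/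
noncomputable section

/-- The subspace spanned by `1` and the symbols with all entries `≤ 0`. -/
def Hneg : Submodule ℚ HZ :=
  Submodule.span ℚ {x : HZ | ∃ l : List ℤ, (∀ i ∈ l, i ≤ 0) ∧ x = bs l}

section Aux

lemma mem_gen {l : List ℤ} (h : ∀ i ∈ l, i ≤ 0) : bs l ∈ Hneg :=
  Submodule.subset_span ⟨l, h, rfl⟩

lemma Jmap_mem : ∀ x ∈ Hneg, Jmap x ∈ Hneg := by
  intro x hx
  induction hx using Submodule.span_induction with
  | mem y hy =>
    obtain ⟨l, hl, rfl⟩ := hy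
    cases l with
    | nil => rw [show Jmap (bs []) = 0 from hlift_bs _ _]; exact Submodule.zero_mem _
    | cons s r =>
      rw [show Jmap (bs (s :: r)) = bs ((s - 1) :: r) from hlift_bs _ _]
      refine mem_gen ?_
      intro i hi
      rcases List.mem_cons.1 hi with h | h
      · have := hl s (List.mem_cons_self); omega
      · exact hl i (List.mem_cons_of_mem _ h)
  | zero => simp
  | add a b _ _ ha hb => rw [map_add]; exact Submodule.add_mem _ ha hb
  | smul c a _ ha => rw [map_smul]; exact Submodule.smul_mem _ _ ha

lemma preZ_mem : ∀ x ∈ Hneg, preZ x ∈ Hneg := by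
  intro x hx
  induction hx using Submodule.span_induction with
  | mem y hy =>
    obtain ⟨l, hl, rfl⟩ := hy
    rw [show preZ (bs l) = bs (0 :: l) from hlift_bs _ _]
    refine mem_gen ?_
    intro i hi
    rcases List.mem_cons.1 hi with h | h
    · omega
    · exact hl i h
  | zero => simp
  | add a b _ _ ha hb => rw [map_add]; exact Submodule.add_mem _ ha hb
  | smul c a _ ha => rw [map_smul]; exact Submodule.smul_mem _ _ ha

lemma key (m : HZ →ₗ[ℚ] HZ →ₗ[ℚ] HZ) (hm : IsExtShuffle m) :
    ∀ s : List ℤ, (∀ i ∈ s, i ≤ 0) → ∀ t : List ℤ, (∀ i ∈ t, i ≤ 0) →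
      m (bs s) (bs t) ∈ Hneg := by
  obtain ⟨h1, h2, h3, _, _, _, h7⟩ := hm
  intro s
  induction s with
  | nil =>
    intro _ t ht
    rw [h1]; exact mem_gen ht
  | cons s₁ s' ih =>
    intro hs
    have hs₁ : s₁ ≤ 0 := hs _ (List.mem_cons_self)
    have hs' : ∀ i ∈ s', i ≤ 0 := fun i hi => hs i (List.mem_cons_of_mem _ hi)
    have hcons : ∀ x : ℤ, x ≤ 0 → ∀ i ∈ x :: s', i ≤ 0 := by
      intro x hx i hi
      rcases List.mem_cons.1 hi with h | h
      · omega
      · exact hs' i h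
    have main : ∀ n : ℕ, ∀ t : List ℤ, (∀ i ∈ t, i ≤ 0) →
        m (bs ((-(n : ℤ)) :: s')) (bs t) ∈ Hneg := by
      intro n
      induction n with
      | zero =>
        intro t ht
        cases t with
        | nil => rw [h2]; exact mem_gen (hcons 0 le_rfl)
        | cons t₁ t' =>
          rw [show (-(0:ℕ) : ℤ) = 0 by norm_num, h3]
          exact preZ_mem _ (ih hs' _ ht)
      | succ k ihk =>
        intro t ht
        cases t with
        | nil => rw [h2]; exact mem_gen (hcons _ (by push_cast; omega))
        | cons t₁ t' =>
          have hneg : (-(↑(k+1)) : ℤ) < 0 := by push_cast; omega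
          rw [h7 _ hneg]
          have e : (-(↑(k+1)) : ℤ) + 1 = -(k : ℤ) := by push_cast; ring
          rw [e]
          have ht' : ∀ i ∈ (t₁ - 1) :: t', i ≤ 0 := by
            intro i hi
            rcases List.mem_cons.1 hi with h | h
            · have := ht t₁ (List.mem_cons_self); omega
            · exact ht i (List.mem_cons_of_mem _ h)
          exact Submodule.sub_mem _ (Jmap_mem _ (ihk _ ht)) (ihk _ ht')
    have hrep : s₁ = -((-s₁).toNat : ℤ) := by omega
    rw [hrep]
    exact main _

end Aux

/-- `(ℋ_{ℤ≤0}, ⧢, J)` is a differential subalgebra of `(ℋ_ℤ, ⧢, J)`. -/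
theorem Hneg_differential_subalgebra (m : HZ →ₗ[ℚ] HZ →ₗ[ℚ] HZ) (hm : IsExtShuffle m) :
    (∀ a ∈ Hneg, ∀ b ∈ Hneg, m a b ∈ Hneg) ∧ (∀ a ∈ Hneg, Jmap a ∈ Hneg) := by
  refine ⟨?_, Jmap_mem⟩
  intro a ha b hb
  induction ha using Submodule.span_induction with
  | mem x hx =>
    obtain ⟨s, hsle, rfl⟩ := hx
    induction hb using Submodule.span_induction with
    | mem y hy =>
      obtain ⟨t, htle, rfl⟩ := hy
      exact key m hm s hsle t htle
    | zero => simp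
    | add u v _ _ hu hv => rw [map_add]; exact Submodule.add_mem _ hu hv
    | smul c u _ hu => rw [map_smul]; exact Submodule.smul_mem _ _ hu
  | zero => simp
  | add u v _ _ hu hv => rw [map_add, LinearMap.add_apply]; exact Submodule.add_mem _ hu hv
  | smul c u _ hu => rw [map_smul, LinearMap.smul_apply]; exact Submodule.smul_mem _ _ hu
end
end
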